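/- Let Φ = (V, 𝒬, 𝒞) be a CSP formula, p' ∈ (0,1) with e·p'·q·(Δ+1) < 1, and X a partial assignment with ℙ[¬c | X] ≤ p'·q for every c ∈ 𝒞. Let v ∈ V be a variable unassigned in X, and let p_rej denote the probability, under the uniform product distribution over the assignments of the unassigned variables occurring in the constraints of 𝒞^X_v, that all constraints in 𝒞^X_v are satisfied (with the variables of Λ(X) fixed to their values in X). Then p_rej ≥ (1 − e·p'·q)^{|𝒞^X_v|}. -/

import Mathlib

open Finset

inductive PVal (α : Type) : Type where
  | val (a : α)
  | star
  | unacc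

structure CSP (V : Type) [Fintype V] [DecidableEq V] where
  Q : V → Type
  fintypeQ : ∀ v, Fintype (Q v)
  decEqQ : ∀ v, DecidableEq (Q v)
  card_two : ∀ v, 2 ≤ Fintype.card (Q v)
  C : Type
  fintypeC : Fintype C
  decEqC : DecidableEq C
  vbl : C → Finset V
  sat : C → ((v : V) → Q v) → Prop
  sat_local : ∀ c x y, (∀ v ∈ vbl c, x v = y v) → sat c x → sat c y

attribute [instance] CSP.fintypeQ CSP.decEqQ CSP.fintypeC CSP.decEqC

namespace CSP

variable {V : Type} [Fintype V] [DecidableEq V] (Φ : CSP V)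

/-- The space of (full) assignments `𝒬 = ∏_v Q_v`. -/
abbrev Assign := (v : V) → Φ.Q v

/-- Partial assignments `𝒬* = ∏_v (Q_v ∪ {⋆, ☆})`. -/
abbrev PAssign := (v : V) → PVal (Φ.Q v)

/-- A full assignment agrees with a partial assignment on all assigned variables. -/
def agrees (σ : Φ.PAssign) (x : Φ.Assign) : Prop :=
  ∀ (v : V) (a : Φ.Q v), σ v = PVal.val a → x v = a

/-- `v ∈ Λ(σ)` : the variable `v` is assigned a value from its domain in `σ`. -/
def assigned (σ : Φ.PAssign) (v : V) : Prop := ∃ a, σ v = PVal.val a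

/-- The set of satisfying assignments. -/
def Sat : Set Φ.Assign := {x | ∀ c, Φ.sat c x}

/-- The event `¬ c` that constraint `c` is violated. -/
def viol (c : Φ.C) : Set Φ.Assign := {x | ¬ Φ.sat c x}

/-- `ℙ[A]` : probability of the event `A` under the uniform product distribution. -/
noncomputable def prob (A : Set Φ.Assign) : ℝ :=
  (A.ncard : ℝ) / (Fintype.card Φ.Assign : ℝ)

/-- `ℙ[A | σ]` : probability of `A` under the uniform product distribution conditioned
on agreeing with `σ` on all assigned variables. -/
noncomputable def condProb (A : Set Φ.Assign) (σ : Φ.PAssign) : ℝ :=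
  ((A ∩ {x | Φ.agrees σ x}).ncard : ℝ) / (({x : Φ.Assign | Φ.agrees σ x}).ncard : ℝ)

/-- `Pr_μ[A]` : probability of `A` under the uniform distribution over satisfying assignments. -/
noncomputable def muProb (A : Set Φ.Assign) : ℝ :=
  ((A ∩ Φ.Sat).ncard : ℝ) / ((Φ.Sat.ncard : ℝ))

/-- the domain size `q`. -/
noncomputable def qmax : ℕ := Finset.univ.sup fun v : V => Fintype.card (Φ.Q v)

/-- the width `k`. -/
noncomputable def width : ℕ := Finset.univ.sup fun c : Φ.C => (Φ.vbl c).card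

/-- the dependency degree `Δ`. -/
noncomputable def degree : ℕ :=
  Finset.univ.sup fun c : Φ.C =>
    (Finset.univ.filter fun c' : Φ.C => c' ≠ c ∧ ((Φ.vbl c) ∩ (Φ.vbl c')).Nonempty).card

end CSP

namespace CSP

variable {V : Type} [Fintype V] [DecidableEq V] (Φ : CSP V) (p' : ℝ)

/-- `C_frozen(σ)` : the set of `σ`-frozen constraints, i.e. those with
`ℙ[¬c | σ] > p'`. -/
def Cfrozen (σ : Φ.PAssign) : Set Φ.C := {c | p' < Φ.condProb (Φ.viol c) σ}

/-- `V_fix(σ) = Λ⁺(σ) ∪ ⋃_{c ∈ C_frozen(σ)} vbl(c)` : the set of `σ`-fixed variables. -/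
def Vfix (σ : Φ.PAssign) : Set V :=
  {v | σ v ≠ PVal.unacc} ∪ ⋃ c ∈ Φ.Cfrozen p' σ, (Φ.vbl c : Set V)

/-- `C_fix(σ)` : constraints not yet satisfied by `σ` all of whose variables are
`σ`-fixed. -/
def Cfix (σ : Φ.PAssign) : Set Φ.C :=
  {c | (Φ.vbl c : Set V) ⊆ Φ.Vfix p' σ ∧ 0 < Φ.condProb (Φ.viol c) σ}

/-- A chain of constraints `cs 0, …, cs n` witnessing `⋆`-influence: it starts at a
constraint containing a `⋆`-variable, all but possibly the last lie in `C_fix(σ)`, and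
consecutive constraints overlap on an unassigned variable. -/
def StarChain (σ : Φ.PAssign) (n : ℕ) (cs : ℕ → Φ.C) : Prop :=
  (∃ u, σ u = PVal.star ∧ u ∈ Φ.vbl (cs 0)) ∧
  (∀ j < n, cs j ∈ Φ.Cfix p' σ) ∧
  (∀ j < n, ∃ w ∈ Φ.vbl (cs j) ∩ Φ.vbl (cs (j + 1)), ¬ Φ.assigned σ w)

/-- `C_⋆(σ)` : constraints reachable by a `⋆`-influence chain. -/
def Cstar (σ : Φ.PAssign) : Set Φ.C :=
  {c | ∃ n cs, Φ.StarChain p' σ n cs ∧ cs n = c}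

/-- `V_⋆(σ)` : the set of `⋆`-influenced variables. -/
def Vstar (σ : Φ.PAssign) : Set V :=
  {w | ∃ n cs, Φ.StarChain p' σ n cs ∧ w ∈ Φ.vbl (cs n)}

/-- `∂V_⋆(σ) = V_⋆(σ) ∖ V_fix(σ)` : the candidate set for `var(σ)`;
`var(σ) = ⊥` precisely when this set is empty. -/
def varSet (σ : Φ.PAssign) : Set V := Φ.Vstar p' σ \ Φ.Vfix p' σ

/-- `var(σ) = u` : `u` is the smallest element (in the fixed ordering of the
variables) of `V_⋆(σ) ∖ V_fix(σ)`. -/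
def IsVar [LinearOrder V] (σ : Φ.PAssign) (u : V) : Prop :=
  u ∈ Φ.varSet p' σ ∧ ∀ w ∈ Φ.varSet p' σ, u ≤ w

/-- `C_rec(σ)` : constraints containing a `⋆`-variable. -/
def Crec (σ : Φ.PAssign) : Set Φ.C := {c | ∃ v ∈ Φ.vbl c, σ v = PVal.star}

/-- `C_⋆frozen(σ) = C_frozen(σ) ∩ C_⋆(σ)`. -/
def CstarFrozen (σ : Φ.PAssign) : Set Φ.C := Φ.Cfrozen p' σ ∩ Φ.Cstar p' σ

/-- `C_bad(σ) = C_rec(σ) ∪ C_⋆frozen(σ)`. -/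
def Cbad (σ : Φ.PAssign) : Set Φ.C := Φ.Crec σ ∪ Φ.CstarFrozen p' σ

/-- `𝒞^X_v` : the constraints of the connected component containing `v` of `Φ`
simplified under `X`. -/
def CompCons (X : Φ.PAssign) (v : V) : Set Φ.C :=
  {c | ∃ (t : ℕ) (cs : ℕ → Φ.C), cs t = c ∧ v ∈ Φ.vbl (cs 0) ∧
    (∀ j ≤ t, 0 < Φ.condProb (Φ.viol (cs j)) X) ∧
    (∀ j < t, ∃ w ∈ Φ.vbl (cs j) ∩ Φ.vbl (cs (j + 1)), ¬ Φ.assigned X w)}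

/-- A var-guided sequence of partial assignments: at each step `i < ℓ`, the next
partial assignment is obtained by giving the variable `var(X_i) ≠ ⊥` a value in
`Q_{var(X_i)} ∪ {⋆}`. -/
def VarGuided [LinearOrder V] (X : ℕ → Φ.PAssign) (ℓ : ℕ) : Prop :=
  ∀ i < ℓ, ∃ (u : V) (a : PVal (Φ.Q u)), a ≠ PVal.unacc ∧
    Φ.IsVar p' (X i) u ∧ X (i + 1) = Function.update (X i) u a

end CSP

/- ===== auxiliary development for statement19 ===== -/

lemma ncard_prod' {α β : Type*} (s : Set α) (t : Set β) :
    (s ×ˢ t).ncard = s.ncard * t.ncard := by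
  have := Nat.card_congr (Equiv.Set.prod s t)
  simpa [Nat.card_coe_set_eq, Nat.card_prod] using this

lemma indep_count {V : Type} [Fintype V] [DecidableEq V] {Q : V → Type}
    [∀ v, Fintype (Q v)] {s t : Set V} (A B : Set ((v : V) → Q v))
    (hA : ∀ x y : (v : V) → Q v, (∀ v ∈ s, x v = y v) → x ∈ A → y ∈ A)
    (hB : ∀ x y : (v : V) → Q v, (∀ v ∈ t, x v = y v) → x ∈ B → y ∈ B)
    (hst : Disjoint s t) :
    (A ∩ B).ncard * Fintype.card ((v : V) → Q v) = A.ncard * B.ncard := by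
  classical
  set e := Equiv.piEquivPiSubtypeProd (· ∈ s) Q with he
  set A₁ : Set ((v : {v // v ∈ s}) → Q v.1) :=
    (fun (x : (v : V) → Q v) (v : {v // v ∈ s}) => x v.1) '' A with hA₁
  set B₂ : Set ((v : {v // ¬ v ∈ s}) → Q v.1) :=
    (fun (x : (v : V) → Q v) (v : {v // ¬ v ∈ s}) => x v.1) '' B with hB₂
  have hAe : ∀ x : (v : V) → Q v,
      x ∈ A ↔ (fun v : {v // v ∈ s} => x v.1) ∈ A₁ := by
    intro x
    constructor
    · intro hx; exact ⟨x, hx, rfl⟩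
    · rintro ⟨y, hy, hproj⟩
      exact hA y x (fun v hv => congrFun hproj ⟨v, hv⟩) hy
  have hBe : ∀ x : (v : V) → Q v,
      x ∈ B ↔ (fun v : {v // ¬ v ∈ s} => x v.1) ∈ B₂ := by
    intro x
    constructor
    · intro hx; exact ⟨x, hx, rfl⟩
    · rintro ⟨y, hy, hproj⟩
      refine hB y x (fun v hv => congrFun hproj ⟨v, ?_⟩) hy
      exact fun hvs => (Set.disjoint_left.1 hst hvs) hv
  have himgAB : e '' (A ∩ B) = A₁ ×ˢ B₂ := by
    ext z
    constructor
    · rintro ⟨x, ⟨hxA, hxB⟩, rfl⟩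
      exact ⟨(hAe x).1 hxA, (hBe x).1 hxB⟩
    · rintro ⟨hz1, hz2⟩
      refine ⟨e.symm z, ⟨?_, ?_⟩, e.apply_symm_apply z⟩
      · rw [hAe]
        have : (fun v : {v // v ∈ s} => (e.symm z) v.1) = z.1 :=
          congrArg Prod.fst (e.apply_symm_apply z)
        rw [this]; exact hz1
      · rw [hBe]
        have : (fun v : {v // ¬ v ∈ s} => (e.symm z) v.1) = z.2 :=
          congrArg Prod.snd (e.apply_symm_apply z)
        rw [this]; exact hz2
  have himgA : e '' A = A₁ ×ˢ Set.univ := by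
    ext z
    constructor
    · rintro ⟨x, hxA, rfl⟩
      exact ⟨(hAe x).1 hxA, Set.mem_univ _⟩
    · rintro ⟨hz1, -⟩
      refine ⟨e.symm z, ?_, e.apply_symm_apply z⟩
      rw [hAe]
      have : (fun v : {v // v ∈ s} => (e.symm z) v.1) = z.1 :=
        congrArg Prod.fst (e.apply_symm_apply z)
      rw [this]; exact hz1
  have himgB : e '' B = Set.univ ×ˢ B₂ := by
    ext z
    constructor
    · rintro ⟨x, hxB, rfl⟩
      exact ⟨Set.mem_univ _, (hBe x).1 hxB⟩
    · rintro ⟨-, hz2⟩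
      refine ⟨e.symm z, ?_, e.apply_symm_apply z⟩
      rw [hBe]
      have : (fun v : {v // ¬ v ∈ s} => (e.symm z) v.1) = z.2 :=
        congrArg Prod.snd (e.apply_symm_apply z)
      rw [this]; exact hz2
  have cAB : (A ∩ B).ncard = A₁.ncard * B₂.ncard := by
    rw [← Set.ncard_image_of_injective (A ∩ B) e.injective, himgAB, ncard_prod']
  have cA : A.ncard = A₁.ncard * Fintype.card ((v : {v // ¬ v ∈ s}) → Q v.1) := by
    rw [← Set.ncard_image_of_injective A e.injective, himgA, ncard_prod',
      Set.ncard_univ, Nat.card_eq_fintype_card]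
  have cB : B.ncard = Fintype.card ((v : {v // v ∈ s}) → Q v.1) * B₂.ncard := by
    rw [← Set.ncard_image_of_injective B e.injective, himgB, ncard_prod',
      Set.ncard_univ, Nat.card_eq_fintype_card]
  have cT : Fintype.card ((v : V) → Q v)
      = Fintype.card ((v : {v // v ∈ s}) → Q v.1)
        * Fintype.card ((v : {v // ¬ v ∈ s}) → Q v.1) := by
    rw [Fintype.card_congr e, Fintype.card_prod]
  rw [cAB, cA, cB, cT]; ring

lemma condindep_count {V : Type} [Fintype V] [DecidableEq V] {Q : V → Type}
    [∀ v, Fintype (Q v)] [Nonempty ((v : V) → Q v)] {s t L : Set V}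
    (A B Om : Set ((v : V) → Q v))
    (hOm : ∀ x y : (v : V) → Q v, (∀ v ∈ L, x v = y v) → x ∈ Om → y ∈ Om)
    (hA : ∀ x y : (v : V) → Q v, x ∈ Om → y ∈ Om → (∀ v ∈ s, x v = y v) → x ∈ A → y ∈ A)
    (hB : ∀ x y : (v : V) → Q v, x ∈ Om → y ∈ Om → (∀ v ∈ t, x v = y v) → x ∈ B → y ∈ B)
    (hst : Disjoint s t) (hsL : Disjoint s L) :
    (A ∩ B ∩ Om).ncard * Om.ncard = (A ∩ Om).ncard * (B ∩ Om).ncard := by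
  classical
  set As : Set ((v : V) → Q v) :=
    {x | ∃ y, (y ∈ A ∧ y ∈ Om) ∧ ∀ v ∈ s, y v = x v} with hAs
  have hAsdet : ∀ x y : (v : V) → Q v, (∀ v ∈ s, x v = y v) → x ∈ As → y ∈ As := by
    rintro x y hxy ⟨z, hz, hzx⟩
    exact ⟨z, hz, fun v hv => (hzx v hv).trans (hxy v hv)⟩
  have hAsOm : As ∩ Om = A ∩ Om := by
    ext x
    constructor
    · rintro ⟨⟨y, ⟨hyA, hyOm⟩, hyx⟩, hxOm⟩
      exact ⟨hA y x hyOm hxOm hyx hyA, hxOm⟩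
    · rintro ⟨hxA, hxOm⟩
      exact ⟨⟨x, ⟨hxA, hxOm⟩, fun v _ => rfl⟩, hxOm⟩
  have hBOmdet : ∀ x y : (v : V) → Q v,
      (∀ v ∈ t ∪ L, x v = y v) → x ∈ B ∩ Om → y ∈ B ∩ Om := by
    rintro x y hxy ⟨hxB, hxOm⟩
    have hyOm : y ∈ Om := hOm x y (fun v hv => hxy v (Or.inr hv)) hxOm
    exact ⟨hB x y hxOm hyOm (fun v hv => hxy v (Or.inl hv)) hxB, hyOm⟩
  have hdisj1 : Disjoint s (t ∪ L) := Set.disjoint_union_right.2 ⟨hst, hsL⟩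
  have h1 := indep_count As (B ∩ Om) hAsdet hBOmdet hdisj1
  have hABO : As ∩ (B ∩ Om) = A ∩ B ∩ Om := by
    ext x
    have := Set.ext_iff.1 hAsOm x
    simp only [Set.mem_inter_iff] at *
    tauto
  rw [hABO] at h1
  have h2 := indep_count As Om hAsdet hOm hsL
  rw [hAsOm] at h2
  by_cases hk : As.ncard = 0
  · have hAOm0 : (A ∩ Om).ncard = 0 := by
      have hsub : A ∩ Om ⊆ As := by rw [← hAsOm]; exact Set.inter_subset_left
      have := Set.ncard_le_ncard hsub (Set.toFinite _)
      omega
    have hABO0 : (A ∩ B ∩ Om).ncard = 0 := by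
      have hsub : A ∩ B ∩ Om ⊆ A ∩ Om := by
        intro x hx; exact ⟨hx.1.1, hx.2⟩
      have := Set.ncard_le_ncard hsub (Set.toFinite _)
      omega
    rw [hABO0, hAOm0, zero_mul, zero_mul]
  · have hN : 0 < Fintype.card ((v : V) → Q v) := Fintype.card_pos
    have key : ((A ∩ B ∩ Om).ncard * Om.ncard) * (As.ncard * Fintype.card ((v : V) → Q v))
        = ((A ∩ Om).ncard * (B ∩ Om).ncard) * (As.ncard * Fintype.card ((v : V) → Q v)) := by
      calc ((A ∩ B ∩ Om).ncard * Om.ncard) * (As.ncard * Fintype.card ((v : V) → Q v))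
          = ((A ∩ B ∩ Om).ncard * Fintype.card ((v : V) → Q v)) * (As.ncard * Om.ncard) := by
            ring
        _ = (As.ncard * (B ∩ Om).ncard) * ((A ∩ Om).ncard * Fintype.card ((v : V) → Q v)) := by
            rw [h1, ← h2]
        _ = ((A ∩ Om).ncard * (B ∩ Om).ncard) * (As.ncard * Fintype.card ((v : V) → Q v)) := by
            ring
    have hpos : 0 < As.ncard * Fintype.card ((v : V) → Q v) :=
      Nat.mul_pos (Nat.pos_of_ne_zero hk) hN
    exact Nat.eq_of_mul_eq_mul_right hpos key

lemma inv_exp_le_one_sub_pow (ε : ℝ) (Δ : ℕ) (h : ε * (Δ + 1) ≤ 1) :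
    (Real.exp 1)⁻¹ ≤ (1 - ε) ^ Δ := by
  rcases Nat.eq_zero_or_pos Δ with hΔ | hΔ
  · subst hΔ
    simp only [pow_zero]
    rw [inv_le_one_iff₀]
    right
    linarith [Real.add_one_le_exp (1 : ℝ)]
  · have hΔR : (0 : ℝ) < Δ := by exact_mod_cast hΔ
    have hεb : ε ≤ 1 / ((Δ : ℝ) + 1) := by
      rw [le_div_iff₀ (by positivity)]
      linarith
    have h1 : (Δ : ℝ) / (Δ + 1) ≤ 1 - ε := by
      have : 1 - 1 / ((Δ : ℝ) + 1) = Δ / (Δ + 1) := by field_simp; ring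
      linarith [this ▸ sub_le_sub_left hεb 1]
    have h2 : (0 : ℝ) ≤ (Δ : ℝ) / (Δ + 1) := by positivity
    have h3 : ((Δ : ℝ) / (Δ + 1)) ^ Δ ≤ (1 - ε) ^ Δ := pow_le_pow_left₀ h2 h1 Δ
    have h4 : (((Δ : ℝ) + 1) / Δ) ^ Δ ≤ Real.exp 1 := by
      have h5 : ((Δ : ℝ) + 1) / Δ ≤ Real.exp (1 / Δ) := by
        have := Real.add_one_le_exp (1 / (Δ : ℝ))
        have heq : ((Δ : ℝ) + 1) / Δ = 1 / Δ + 1 := by field_simp; ring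
        linarith
      calc (((Δ : ℝ) + 1) / Δ) ^ Δ ≤ (Real.exp (1 / Δ)) ^ Δ :=
            pow_le_pow_left₀ (by positivity) h5 Δ
        _ = Real.exp ((Δ : ℝ) * (1 / Δ)) := (Real.exp_nat_mul _ Δ).symm
        _ = Real.exp 1 := by rw [mul_one_div, div_self (ne_of_gt hΔR)]
    have h6 : (Real.exp 1)⁻¹ ≤ ((Δ : ℝ) / (Δ + 1)) ^ Δ := by
      have hpos : (0 : ℝ) < (((Δ : ℝ) + 1) / Δ) ^ Δ := by positivity
      calc (Real.exp 1)⁻¹ ≤ ((((Δ : ℝ) + 1) / Δ) ^ Δ)⁻¹ := inv_anti₀ hpos h4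
        _ = ((Δ : ℝ) / (Δ + 1)) ^ Δ := by rw [← inv_pow, inv_div]
    linarith

namespace LLLAux

open CSP

variable {V : Type} [Fintype V] [DecidableEq V] (Φ : CSP V)

/-- The event that all constraints in `S` are satisfied. -/
def Gs (S : Finset Φ.C) : Set Φ.Assign := {x | ∀ c ∈ S, Φ.sat c x}

/-- The event of agreeing with `X`. -/
def Om (X : Φ.PAssign) : Set Φ.Assign := {x | Φ.agrees X x}

lemma nonemptyQ (v : V) : Nonempty (Φ.Q v) := by
  have := Φ.card_two v
  exact Fintype.card_pos_iff.1 (by omega)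

lemma nonemptyAssign : Nonempty Φ.Assign := by
  have h := nonemptyQ Φ
  exact ⟨fun v => @Classical.ofNonempty _ (h v)⟩

lemma Om_nonempty (X : Φ.PAssign) : (Om Φ X).Nonempty := by
  classical
  have hne := nonemptyQ Φ
  have : ∀ v, Nonempty (Φ.Q v) := hne
  refine ⟨fun v => if hh : ∃ a, X v = PVal.val a then hh.choose
    else @Classical.ofNonempty _ (hne v), ?_⟩
  intro v a h
  have hh : ∃ b, X v = PVal.val b := ⟨a, h⟩
  simp only [dif_pos hh]
  have h2 := hh.choose_spec
  injection h.symm.trans h2 with h3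
  exact h3.symm

lemma Gs_split (S : Finset Φ.C) (c : Φ.C) (W : Set Φ.Assign) :
    (Gs Φ S ∩ W).ncard
      = (Gs Φ (insert c S) ∩ W).ncard + (Φ.viol c ∩ Gs Φ S ∩ W).ncard := by
  classical
  have hsplit : Gs Φ S ∩ W = (Gs Φ (insert c S) ∩ W) ∪ (Φ.viol c ∩ Gs Φ S ∩ W) := by
    ext x
    constructor
    · rintro ⟨hxG, hxW⟩
      by_cases hsat : Φ.sat c x
      · exact Or.inl ⟨fun c' hc' => by
          rcases Finset.mem_insert.1 hc' with h | h
          · exact h ▸ hsat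
          · exact hxG c' h, hxW⟩
      · exact Or.inr ⟨⟨hsat, hxG⟩, hxW⟩
    · rintro (⟨hxG, hxW⟩ | ⟨⟨_, hxG⟩, hxW⟩)
      · exact ⟨fun c' hc' => hxG c' (Finset.mem_insert_of_mem hc'), hxW⟩
      · exact ⟨hxG, hxW⟩
  have hdisj : Disjoint (Gs Φ (insert c S) ∩ W) (Φ.viol c ∩ Gs Φ S ∩ W) := by
    rw [Set.disjoint_left]
    rintro x ⟨hxG, -⟩ ⟨⟨hviol, -⟩, -⟩
    exact hviol (hxG c (Finset.mem_insert_self c S))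
  rw [hsplit, Set.ncard_union_eq hdisj (Set.toFinite _) (Set.toFinite _)]

lemma the_claim (X : Φ.PAssign) (p' : ℝ) (hpq0 : 0 < p' * (Φ.qmax : ℝ))
    (hlll : Real.exp 1 * p' * (Φ.qmax : ℝ) * ((Φ.degree : ℝ) + 1) < 1)
    (hcond : ∀ c, ((Φ.viol c ∩ Om Φ X).ncard : ℝ)
      ≤ p' * (Φ.qmax : ℝ) * ((Om Φ X).ncard : ℝ)) :
    ∀ (n : ℕ) (S : Finset Φ.C) (c : Φ.C), S.card ≤ n →
      ((Φ.viol c ∩ Gs Φ S ∩ Om Φ X).ncard : ℝ)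
        ≤ (Real.exp 1 * p' * (Φ.qmax : ℝ)) * ((Gs Φ S ∩ Om Φ X).ncard : ℝ) := by
  classical
  have hne : Nonempty Φ.Assign := nonemptyAssign Φ
  set q : ℝ := (Φ.qmax : ℝ) with hq
  set ε : ℝ := Real.exp 1 * p' * q with hε
  have he1 : (1 : ℝ) ≤ Real.exp 1 := by linarith [Real.add_one_le_exp (1 : ℝ)]
  have hε0 : 0 < ε := by
    rw [hε, mul_assoc]
    exact mul_pos (lt_of_lt_of_le one_pos he1) hpq0
  have hεΔ : ε * ((Φ.degree : ℝ) + 1) < 1 := by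
    rw [hε]; rw [mul_assoc, mul_assoc] at hlll ⊢; exact hlll
  have hε1 : ε < 1 := by
    have h1 : (1 : ℝ) ≤ (Φ.degree : ℝ) + 1 := by
      have : (0 : ℝ) ≤ (Φ.degree : ℝ) := Nat.cast_nonneg _
      linarith
    nlinarith
  have hkey : p' * q ≤ ε * (1 - ε) ^ Φ.degree := by
    have hie := inv_exp_le_one_sub_pow ε Φ.degree (le_of_lt hεΔ)
    have : p' * q = (Real.exp 1 * p' * q) * (Real.exp 1)⁻¹ := by
      field_simp
    rw [this, hε]
    exact mul_le_mul_of_nonneg_left hie (by rw [hε] at hε0; linarith)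
  have hOmpos : (0 : ℝ) < ((Om Φ X).ncard : ℝ) := by
    have := (Set.ncard_pos (Set.toFinite _)).2 (Om_nonempty Φ X)
    exact_mod_cast this
  have h1ε : (0 : ℝ) ≤ 1 - ε := by linarith
  intro n
  induction n with
  | zero =>
    intro S c hcard
    have hS : S = ∅ := Finset.card_eq_zero.1 (Nat.le_zero.1 hcard)
    subst hS
    have hGs : Gs Φ (∅ : Finset Φ.C) = Set.univ := by
      ext x; simp [Gs]
    rw [hGs, Set.inter_univ, Set.univ_inter]
    calc ((Φ.viol c ∩ Om Φ X).ncard : ℝ) ≤ p' * q * ((Om Φ X).ncard : ℝ) := hcond c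
      _ ≤ ε * ((Om Φ X).ncard : ℝ) := by
          apply mul_le_mul_of_nonneg_right _ (le_of_lt hOmpos)
          rw [hε]
          nlinarith
  | succ n ih =>
    intro S c hcard
    by_cases hcS : c ∈ S
    · have h0 : Φ.viol c ∩ Gs Φ S ∩ Om Φ X = ∅ := by
        ext x
        simp only [Set.mem_inter_iff, Set.mem_empty_iff_false, iff_false, not_and]
        rintro ⟨hviol, hG⟩
        exact absurd (hG c hcS) hviol
      rw [h0]
      simp only [Set.ncard_empty, Nat.cast_zero]
      positivity
    · set S₁ : Finset Φ.C :=
        S.filter (fun c' => ∃ w ∈ Φ.vbl c ∩ Φ.vbl c', ¬ Φ.assigned X w) with hS₁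
      set S₂ : Finset Φ.C := S \ S₁ with hS₂
      have hS₁S : S₁ ⊆ S := Finset.filter_subset _ _
      have hS₂S : S₂ ⊆ S := Finset.sdiff_subset
      have hS₂S₁ : S₂ ∪ S₁ = S := Finset.sdiff_union_of_subset hS₁S
      -- relative bound
      have relb : ∀ T : Finset Φ.C, T ⊆ S₁ →
          (1 - ε) ^ T.card * ((Gs Φ S₂ ∩ Om Φ X).ncard : ℝ)
            ≤ ((Gs Φ (S₂ ∪ T) ∩ Om Φ X).ncard : ℝ) := by
        intro T
        induction T using Finset.induction_on with
        | empty => simp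
        | insert c' T hc'T ihT =>
          intro hsub
          have hc'S₁ : c' ∈ S₁ := hsub (Finset.mem_insert_self c' T)
          have hTsub : T ⊆ S₁ := fun x hx => hsub (Finset.mem_insert_of_mem hx)
          have hW : S₂ ∪ insert c' T = insert c' (S₂ ∪ T) := by
            ext x
            simp only [Finset.mem_union, Finset.mem_insert]
            tauto
          have hc'S : c' ∈ S := hS₁S hc'S₁
          have hcardW : (S₂ ∪ T).card ≤ n := by
            have hsub2 : S₂ ∪ T ⊆ S.erase c' := by
              intro x hx
              rcases Finset.mem_union.1 hx with h | h
              · refine Finset.mem_erase.2 ⟨?_, hS₂S h⟩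
                rintro rfl
                exact (Finset.mem_sdiff.1 h).2 hc'S₁
              · refine Finset.mem_erase.2 ⟨?_, hS₁S (hTsub h)⟩
                rintro rfl
                exact hc'T h
            have := Finset.card_le_card hsub2
            have := Finset.card_erase_of_mem hc'S
            omega
          have hdec := Gs_split Φ (S₂ ∪ T) c' (Om Φ X)
          have hclaim := ih (S₂ ∪ T) c' hcardW
          have hih := ihT hTsub
          have hcastdec : ((Gs Φ (S₂ ∪ T) ∩ Om Φ X).ncard : ℝ)
              = ((Gs Φ (insert c' (S₂ ∪ T)) ∩ Om Φ X).ncard : ℝ)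
                + ((Φ.viol c' ∩ Gs Φ (S₂ ∪ T) ∩ Om Φ X).ncard : ℝ) := by
            exact_mod_cast congrArg (Nat.cast : ℕ → ℝ) hdec
          rw [hW, Finset.card_insert_of_notMem hc'T]
          have hstep : (1 - ε) * ((Gs Φ (S₂ ∪ T) ∩ Om Φ X).ncard : ℝ)
              ≤ ((Gs Φ (insert c' (S₂ ∪ T)) ∩ Om Φ X).ncard : ℝ) := by
            nlinarith [hclaim, hcastdec]
          calc (1 - ε) ^ (T.card + 1) * ((Gs Φ S₂ ∩ Om Φ X).ncard : ℝ)
              = (1 - ε) * ((1 - ε) ^ T.card * ((Gs Φ S₂ ∩ Om Φ X).ncard : ℝ)) := by ring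
            _ ≤ (1 - ε) * ((Gs Φ (S₂ ∪ T) ∩ Om Φ X).ncard : ℝ) :=
                mul_le_mul_of_nonneg_left hih h1ε
            _ ≤ ((Gs Φ (insert c' (S₂ ∪ T)) ∩ Om Φ X).ncard : ℝ) := hstep
      have hrel : (1 - ε) ^ S₁.card * ((Gs Φ S₂ ∩ Om Φ X).ncard : ℝ)
          ≤ ((Gs Φ S ∩ Om Φ X).ncard : ℝ) := by
        have := relb S₁ (Finset.Subset.refl S₁)
        rwa [hS₂S₁] at this
      -- cardinality of S₁
      have hS₁card : S₁.card ≤ Φ.degree := by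
        have hsub : S₁ ⊆ Finset.univ.filter
            (fun c' : Φ.C => c' ≠ c ∧ ((Φ.vbl c) ∩ (Φ.vbl c')).Nonempty) := by
          intro c' hc'
          rw [Finset.mem_filter] at hc' ⊢
          obtain ⟨hc'S, w, hw, -⟩ := hc'
          refine ⟨Finset.mem_univ _, ?_, ⟨w, hw⟩⟩
          rintro rfl
          exact hcS hc'S
        calc S₁.card ≤ _ := Finset.card_le_card hsub
          _ ≤ Φ.degree := by
            unfold CSP.degree
            exact Finset.le_sup (f := fun c0 : Φ.C =>
              (Finset.univ.filter fun c' : Φ.C =>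
                c' ≠ c0 ∧ ((Φ.vbl c0) ∩ (Φ.vbl c')).Nonempty).card)
              (Finset.mem_univ c)
      -- independence
      have hindep : ((Φ.viol c ∩ Gs Φ S₂ ∩ Om Φ X).ncard) * ((Om Φ X).ncard)
          = ((Φ.viol c ∩ Om Φ X).ncard) * ((Gs Φ S₂ ∩ Om Φ X).ncard) := by
        set L : Set V := {v | Φ.assigned X v} with hL
        set sA : Set V := (↑(Φ.vbl c) : Set V) \ L with hsA
        set sB : Set V := (⋃ c' ∈ S₂, (↑(Φ.vbl c') : Set V)) \ L with hsB
        have hOmdet : ∀ x y : Φ.Assign, (∀ v ∈ L, x v = y v)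
            → x ∈ Om Φ X → y ∈ Om Φ X := by
          intro x y hxy hx v a ha
          have hvL : v ∈ L := ⟨a, ha⟩
          rw [← hxy v hvL]
          exact hx v a ha
        have hAdet : ∀ x y : Φ.Assign, x ∈ Om Φ X → y ∈ Om Φ X
            → (∀ v ∈ sA, x v = y v) → x ∈ Φ.viol c → y ∈ Φ.viol c := by
          intro x y hx hy hxy hviol hsaty
          apply hviol
          apply Φ.sat_local c y x _ hsaty
          intro v hv
          by_cases hvL : v ∈ L
          · obtain ⟨a, ha⟩ := hvL
            rw [hx v a ha, hy v a ha]
          · exact (hxy v ⟨hv, hvL⟩).symm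
        have hBdet : ∀ x y : Φ.Assign, x ∈ Om Φ X → y ∈ Om Φ X
            → (∀ v ∈ sB, x v = y v) → x ∈ Gs Φ S₂ → y ∈ Gs Φ S₂ := by
          intro x y hx hy hxy hG c' hc'
          apply Φ.sat_local c' x y _ (hG c' hc')
          intro v hv
          by_cases hvL : v ∈ L
          · obtain ⟨a, ha⟩ := hvL
            rw [hx v a ha, hy v a ha]
          · refine hxy v ⟨?_, hvL⟩
            exact Set.mem_biUnion hc' hv
        have hst : Disjoint sA sB := by
          rw [Set.disjoint_left]
          rintro v ⟨hvc, hvL⟩ ⟨hvB, -⟩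
          obtain ⟨c', hc'S₂, hvc'⟩ := Set.mem_iUnion₂.1 hvB
          have hc'S₁ : c' ∈ S₁ := by
            rw [hS₁, Finset.mem_filter]
            exact ⟨hS₂S hc'S₂, v, Finset.mem_inter.2 ⟨hvc, hvc'⟩, hvL⟩
          exact (Finset.mem_sdiff.1 hc'S₂).2 hc'S₁
        have hsL : Disjoint sA L := Set.disjoint_sdiff_left
        exact condindep_count (Φ.viol c) (Gs Φ S₂) (Om Φ X) hOmdet hAdet hBdet hst hsL
      have hindepR : ((Φ.viol c ∩ Gs Φ S₂ ∩ Om Φ X).ncard : ℝ) * ((Om Φ X).ncard : ℝ)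
          = ((Φ.viol c ∩ Om Φ X).ncard : ℝ) * ((Gs Φ S₂ ∩ Om Φ X).ncard : ℝ) := by
        exact_mod_cast congrArg (Nat.cast : ℕ → ℝ) hindep
      -- monotonicity
      have hmono : ((Φ.viol c ∩ Gs Φ S ∩ Om Φ X).ncard : ℝ)
          ≤ ((Φ.viol c ∩ Gs Φ S₂ ∩ Om Φ X).ncard : ℝ) := by
        have hsub : Φ.viol c ∩ Gs Φ S ∩ Om Φ X ⊆ Φ.viol c ∩ Gs Φ S₂ ∩ Om Φ X := by
          rintro x ⟨⟨hv, hG⟩, hO⟩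
          exact ⟨⟨hv, fun c' hc' => hG c' (hS₂S hc')⟩, hO⟩
        exact_mod_cast Set.ncard_le_ncard hsub (Set.toFinite _)
      -- final chain
      have hGnn : (0 : ℝ) ≤ ((Gs Φ S₂ ∩ Om Φ X).ncard : ℝ) := Nat.cast_nonneg _
      have hpow : ε * (1 - ε) ^ Φ.degree ≤ ε * (1 - ε) ^ S₁.card := by
        apply mul_le_mul_of_nonneg_left _ (le_of_lt hε0)
        exact pow_le_pow_of_le_one h1ε (by linarith) hS₁card
      have hfin : p' * q * ((Gs Φ S₂ ∩ Om Φ X).ncard : ℝ)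
          ≤ ε * ((Gs Φ S ∩ Om Φ X).ncard : ℝ) := by
        calc p' * q * ((Gs Φ S₂ ∩ Om Φ X).ncard : ℝ)
            ≤ (ε * (1 - ε) ^ S₁.card) * ((Gs Φ S₂ ∩ Om Φ X).ncard : ℝ) := by
              apply mul_le_mul_of_nonneg_right _ hGnn
              exact le_trans hkey hpow
          _ = ε * ((1 - ε) ^ S₁.card * ((Gs Φ S₂ ∩ Om Φ X).ncard : ℝ)) := by ring
          _ ≤ ε * ((Gs Φ S ∩ Om Φ X).ncard : ℝ) :=
              mul_le_mul_of_nonneg_left hrel (le_of_lt hε0)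
      -- combine, multiplying through by (Om).ncard
      rw [← mul_le_mul_iff_of_pos_right hOmpos]
      calc ((Φ.viol c ∩ Gs Φ S ∩ Om Φ X).ncard : ℝ) * ((Om Φ X).ncard : ℝ)
          ≤ ((Φ.viol c ∩ Gs Φ S₂ ∩ Om Φ X).ncard : ℝ) * ((Om Φ X).ncard : ℝ) :=
            mul_le_mul_of_nonneg_right hmono (le_of_lt hOmpos)
        _ = ((Φ.viol c ∩ Om Φ X).ncard : ℝ) * ((Gs Φ S₂ ∩ Om Φ X).ncard : ℝ) := hindepR
        _ ≤ (p' * q * ((Om Φ X).ncard : ℝ)) * ((Gs Φ S₂ ∩ Om Φ X).ncard : ℝ) :=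
            mul_le_mul_of_nonneg_right (hcond c) hGnn
        _ = (p' * q * ((Gs Φ S₂ ∩ Om Φ X).ncard : ℝ)) * ((Om Φ X).ncard : ℝ) := by ring
        _ ≤ (ε * ((Gs Φ S ∩ Om Φ X).ncard : ℝ)) * ((Om Φ X).ncard : ℝ) :=
            mul_le_mul_of_nonneg_right hfin (le_of_lt hOmpos)
        _ = ε * ((Gs Φ S ∩ Om Φ X).ncard : ℝ) * ((Om Φ X).ncard : ℝ) := by ring

lemma the_bound (X : Φ.PAssign) (p' : ℝ) (hpq0 : 0 < p' * (Φ.qmax : ℝ))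
    (hlll : Real.exp 1 * p' * (Φ.qmax : ℝ) * ((Φ.degree : ℝ) + 1) < 1)
    (hcond : ∀ c, ((Φ.viol c ∩ Om Φ X).ncard : ℝ)
      ≤ p' * (Φ.qmax : ℝ) * ((Om Φ X).ncard : ℝ)) :
    ∀ S : Finset Φ.C,
      (1 - Real.exp 1 * p' * (Φ.qmax : ℝ)) ^ S.card * (((Om Φ X).ncard : ℝ))
        ≤ ((Gs Φ S ∩ Om Φ X).ncard : ℝ) := by
  classical
  set ε : ℝ := Real.exp 1 * p' * (Φ.qmax : ℝ) with hε
  have hclaim := the_claim Φ X p' hpq0 hlll hcond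
  intro S
  induction S using Finset.induction_on with
  | empty =>
    have hGs : Gs Φ (∅ : Finset Φ.C) = Set.univ := by ext x; simp [Gs]
    rw [hGs, Set.univ_inter, Finset.card_empty, pow_zero, one_mul]
  | insert c S hcS ihS =>
    have hdec := Gs_split Φ S c (Om Φ X)
    have hcastdec : ((Gs Φ S ∩ Om Φ X).ncard : ℝ)
        = ((Gs Φ (insert c S) ∩ Om Φ X).ncard : ℝ)
          + ((Φ.viol c ∩ Gs Φ S ∩ Om Φ X).ncard : ℝ) := by
      exact_mod_cast congrArg (Nat.cast : ℕ → ℝ) hdec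
    have hcl := hclaim S.card S c le_rfl
    rw [Finset.card_insert_of_notMem hcS]
    have h1ε : (1 - ε) * ((Gs Φ S ∩ Om Φ X).ncard : ℝ)
        ≤ ((Gs Φ (insert c S) ∩ Om Φ X).ncard : ℝ) := by
      rw [hε] at *
      nlinarith
    have hOmnn : (0 : ℝ) ≤ ((Om Φ X).ncard : ℝ) := Nat.cast_nonneg _
    have hεle : ε * ((Φ.degree : ℝ) + 1) < 1 := by
      rw [hε]; rw [mul_assoc, mul_assoc] at hlll ⊢; exact hlll
    have hε0 : 0 < ε := by
      rw [hε, mul_assoc]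
      have he1 : (1 : ℝ) ≤ Real.exp 1 := by linarith [Real.add_one_le_exp (1 : ℝ)]
      exact mul_pos (lt_of_lt_of_le one_pos he1) hpq0
    have hd1 : (1 : ℝ) ≤ (Φ.degree : ℝ) + 1 := by
      have : (0 : ℝ) ≤ (Φ.degree : ℝ) := Nat.cast_nonneg _
      linarith
    have h1εnn : (0 : ℝ) ≤ 1 - ε := by nlinarith
    calc (1 - ε) ^ (S.card + 1) * ((Om Φ X).ncard : ℝ)
        = (1 - ε) * ((1 - ε) ^ S.card * ((Om Φ X).ncard : ℝ)) := by ring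
      _ ≤ (1 - ε) * ((Gs Φ S ∩ Om Φ X).ncard : ℝ) :=
          mul_le_mul_of_nonneg_left ihS h1εnn
      _ ≤ ((Gs Φ (insert c S) ∩ Om Φ X).ncard : ℝ) := h1ε

end LLLAux

/-- **Efficiency of rejection sampling on one component.**
If `e·p'·q·(Δ+1) < 1` and `ℙ[¬c | X] ≤ p'·q` for all constraints `c`, then for any
variable `v` unassigned in `X`, the probability (under the uniform product distribution
conditioned on `X`) that all constraints of the component `𝒞^X_v` are satisfied is at
least `(1 − e·p'·q)^{|𝒞^X_v|}`. -/
theorem statement19 {V : Type} [Fintype V] [DecidableEq V] (Φ : CSP V)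
    (p' : ℝ) (hp' : p' ∈ Set.Ioo (0 : ℝ) 1)
    (hlll : Real.exp 1 * p' * (Φ.qmax : ℝ) * ((Φ.degree : ℝ) + 1) < 1)
    (X : Φ.PAssign) (hcond : ∀ c, Φ.condProb (Φ.viol c) X ≤ p' * (Φ.qmax : ℝ))
    (v : V) (hv : ¬ Φ.assigned X v) :
    (1 - Real.exp 1 * p' * (Φ.qmax : ℝ)) ^ ((Φ.CompCons X v).ncard)
      ≤ Φ.condProb {x : Φ.Assign | ∀ c ∈ Φ.CompCons X v, Φ.sat c x} X := by
  classical
  have hq2 : (2 : ℝ) ≤ (Φ.qmax : ℝ) := by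
    have h1 : Fintype.card (Φ.Q v) ≤ Φ.qmax :=
      Finset.le_sup (f := fun v : V => Fintype.card (Φ.Q v)) (Finset.mem_univ v)
    have h2 := Φ.card_two v
    exact_mod_cast le_trans h2 h1
  have hpq0 : 0 < p' * (Φ.qmax : ℝ) := mul_pos hp'.1 (by linarith)
  have hOmpos : (0 : ℝ) < (({x : Φ.Assign | Φ.agrees X x}).ncard : ℝ) := by
    have := (Set.ncard_pos (Set.toFinite _)).2 (LLLAux.Om_nonempty Φ X)
    exact_mod_cast this
  have hcond' : ∀ c, ((Φ.viol c ∩ LLLAux.Om Φ X).ncard : ℝ)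
      ≤ p' * (Φ.qmax : ℝ) * ((LLLAux.Om Φ X).ncard : ℝ) := by
    intro c
    have h := hcond c
    rw [CSP.condProb, div_le_iff₀ hOmpos] at h
    exact h
  set S : Finset Φ.C := (Set.toFinite (Φ.CompCons X v)).toFinset with hS
  have hset : {x : Φ.Assign | ∀ c ∈ Φ.CompCons X v, Φ.sat c x} = LLLAux.Gs Φ S := by
    ext x
    simp only [LLLAux.Gs, Set.mem_setOf_eq, hS, Set.Finite.mem_toFinset]
  have hncard : (Φ.CompCons X v).ncard = S.card :=
    Set.ncard_eq_toFinset_card _ _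
  have hb := LLLAux.the_bound Φ X p' hpq0 hlll hcond' S
  rw [CSP.condProb, le_div_iff₀ hOmpos, hset, hncard]
  exact hb
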